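/- Let q = |K| and suppose tuples of K-subspaces 𝒰 = (U_1,...,U_{q+1}) and 𝒱 = (V_1,...,V_{q+1}) of a finite-dimensional K-space satisfy ∑_i (1/|V_i|)·1_{V_i} = ∑_i (1/|U_i|)·1_{U_i}, with max_i dim V_i > max_i dim U_i. Then, letting k = max_i dim V_i, there exist subspaces S ⊂ V with dim V = k and dim S = k−2 such that, up to permutation, V_1 = ... = V_q = V, V_{q+1} = S, and U_1, ..., U_{q+1} are precisely the q+1 distinct hyperplanes of V containing S. -/

import Mathlib

open Finset Module

set_option linter.unusedSectionVars false

section Aux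
variable {K W : Type*} [Field K] [Fintype K] [AddCommGroup W] [Module K W] [FiniteDimensional K W]

lemma aux_union_two (S A B : Submodule K W) (h : ∀ x ∈ S, x ∈ A ∨ x ∈ B) :
    S ≤ A ∨ S ≤ B := by
  by_contra hc
  push_neg at hc
  obtain ⟨a, haS, haA⟩ := SetLike.not_le_iff_exists.mp hc.1
  obtain ⟨b, hbS, hbB⟩ := SetLike.not_le_iff_exists.mp hc.2
  have haB : a ∈ B := (h a haS).resolve_left haA
  have hbA : b ∈ A := (h b hbS).resolve_right hbB
  rcases h (a + b) (S.add_mem haS hbS) with hab | hab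
  · exact haA (by simpa using A.sub_mem hab hbA)
  · exact hbB (by simpa using B.sub_mem hab haB)

lemma aux_not_covered (𝒱 : Submodule K W) (G : Finset (Submodule K W))
    (hcard : G.card ≤ Fintype.card K) (hprop : ∀ p ∈ G, ¬ 𝒱 ≤ p) :
    ∃ w ∈ 𝒱, ∀ p ∈ G, w ∉ p := by
  classical
  by_contra hcon
  push_neg at hcon
  rcases G.eq_empty_or_nonempty with hG | hG
  · obtain ⟨p, hp, _⟩ := hcon 0 𝒱.zero_mem
    simp [hG] at hp
  haveI : Finite W := Module.finite_of_finite K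
  haveI : Fintype W := Fintype.ofFinite W
  set q := Fintype.card K with hq
  have hq2 : 2 ≤ q := Fintype.one_lt_card
  obtain ⟨p₀, hp₀⟩ := hG
  have hVbot : 𝒱 ≠ ⊥ := fun h => hprop p₀ hp₀ (h ▸ bot_le)
  set k := Module.finrank K 𝒱 with hkdef
  have hk1 : 1 ≤ k := by
    haveI : Nontrivial 𝒱 := Submodule.nontrivial_iff_ne_bot.mpr hVbot
    exact Module.finrank_pos
  have hcard_sub : ∀ p : Submodule K W,
      (univ.filter (fun w : W => w ∈ p)).card = q ^ (Module.finrank K p) := by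
    intro p
    rw [← Fintype.card_subtype]
    exact card_eq_pow_finrank
  have hsubset : (univ.filter (fun w : W => w ∈ 𝒱)).erase 0 ⊆
      G.biUnion (fun p => (univ.filter (fun w : W => w ∈ p ⊓ 𝒱)).erase 0) := by
    intro w hw
    rw [mem_erase, mem_filter] at hw
    obtain ⟨p, hpG, hwp⟩ := hcon w hw.2.2
    exact mem_biUnion.mpr ⟨p, hpG, mem_erase.mpr ⟨hw.1,
      mem_filter.mpr ⟨mem_univ _, Submodule.mem_inf.mpr ⟨hwp, hw.2.2⟩⟩⟩⟩
  have h1 : ((univ.filter (fun w : W => w ∈ 𝒱)).erase 0).card = q ^ k - 1 := by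
    rw [card_erase_of_mem (mem_filter.mpr ⟨mem_univ _, 𝒱.zero_mem⟩), hcard_sub]
  have h2 : ∀ p ∈ G, ((univ.filter (fun w : W => w ∈ p ⊓ 𝒱)).erase 0).card
      ≤ q ^ (k - 1) - 1 := by
    intro p hp
    rw [card_erase_of_mem (mem_filter.mpr ⟨mem_univ _, (p ⊓ 𝒱).zero_mem⟩), hcard_sub]
    have hlt : p ⊓ 𝒱 < 𝒱 := by
      refine lt_of_le_of_ne inf_le_right (fun h => hprop p hp ?_)
      rw [← h]; exact inf_le_left
    have := Submodule.finrank_lt_finrank_of_lt hlt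
    exact Nat.sub_le_sub_right (Nat.pow_le_pow_right (by omega) (by omega)) 1
  have hchain : q ^ k - 1 ≤ q * (q ^ (k - 1) - 1) := by
    calc q ^ k - 1 ≤ (G.biUnion (fun p => (univ.filter (fun w : W => w ∈ p ⊓ 𝒱)).erase 0)).card := by
          rw [← h1]; exact card_le_card hsubset
    _ ≤ ∑ p ∈ G, ((univ.filter (fun w : W => w ∈ p ⊓ 𝒱)).erase 0).card := card_biUnion_le
    _ ≤ ∑ _p ∈ G, (q ^ (k - 1) - 1) := sum_le_sum h2
    _ = G.card * (q ^ (k - 1) - 1) := by rw [sum_const, smul_eq_mul]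
    _ ≤ q * (q ^ (k - 1) - 1) := Nat.mul_le_mul_right _ hcard
  have hqk : q ^ k = q * q ^ (k - 1) := by
    rw [← pow_succ']; congr 1; omega
  have hpow1 : 1 ≤ q ^ (k - 1) := Nat.one_le_pow _ _ (by omega)
  have hy1 : q ^ (k - 1) - 1 + 1 = q ^ (k - 1) := by omega
  have hz : q * q ^ (k - 1) = q * (q ^ (k - 1) - 1) + q := by
    conv_lhs => rw [← hy1]
    rw [Nat.mul_succ]
  omega

lemma aux_real (r Q c1 cd SD : ℝ) (h3 : c1 + cd = (Q + 1 - r) * c1 + SD)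
    (h2 : r * cd ≤ SD) (hr : 1 ≤ r) (hQ : 2 ≤ Q) (hc1 : 0 < c1) (hcd : Q * c1 ≤ cd) :
    False := by
  nlinarith [mul_nonneg (sub_nonneg.mpr hr) (sub_nonneg.mpr hcd),
    mul_pos (mul_pos (show (0:ℝ) < r by linarith) (show (0:ℝ) < Q - 1 by linarith)) hc1]

end Aux

theorem stmt_19 (K W : Type*) [Field K] [Fintype K]
    [AddCommGroup W] [Module K W] [FiniteDimensional K W]
    (U V : Fin (Fintype.card K + 1) → Submodule K W)
    (heq : ∀ w : W,
      ∑ i, (Nat.card (V i) : ℝ)⁻¹ * Set.indicator (V i : Set W) 1 w =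
      ∑ i, (Nat.card (U i) : ℝ)⁻¹ * Set.indicator (U i : Set W) 1 w)
    (hmax : (Finset.univ.sup fun i => Module.finrank K (V i)) >
            (Finset.univ.sup fun i => Module.finrank K (U i)))
    (k : ℕ) (hk : k = Finset.univ.sup fun i => Module.finrank K (V i)) :
    ∃ (Vsp S : Submodule K W), S ≤ Vsp ∧
      Module.finrank K Vsp = k ∧ Module.finrank K S = k - 2 ∧
      (∃ π : Equiv.Perm (Fin (Fintype.card K + 1)),
        ∀ i, V (π i) = if i = Fin.last (Fintype.card K) then S else Vsp) ∧
      Function.Injective U ∧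
      (∀ W' : Submodule K W, W' ∈ Set.range U ↔
        S ≤ W' ∧ W' ≤ Vsp ∧ Module.finrank K W' = k - 1) := by
  classical
  have hq2 : 2 ≤ Fintype.card K := Fintype.one_lt_card
  have hq2R : (2:ℝ) ≤ ((Fintype.card K : ℕ):ℝ) := by exact_mod_cast hq2
  -- normalized inverse cardinalities
  set cInv : ℕ → ℝ := fun n => ((Fintype.card K ^ n : ℕ) : ℝ)⁻¹ with hcInvdef
  have cpos : ∀ n, 0 < cInv n := by
    intro n
    have : (0:ℝ) < ((Fintype.card K ^ n : ℕ) : ℝ) := by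
      exact_mod_cast pow_pos (show 0 < Fintype.card K by omega) n
    exact inv_pos.mpr this
  have cle : ∀ {a b : ℕ}, a ≤ b → cInv b ≤ cInv a := by
    intro a b h
    apply inv_anti₀
    · exact_mod_cast pow_pos (show 0 < Fintype.card K by omega) a
    · exact_mod_cast Nat.pow_le_pow_right (by omega) h
  have clt : ∀ {a b : ℕ}, a < b → cInv b < cInv a := by
    intro a b h
    apply inv_strictAnti₀
    · exact_mod_cast pow_pos (show 0 < Fintype.card K by omega) a
    · exact_mod_cast Nat.pow_lt_pow_right (by omega) h
  have cinj : ∀ {a b : ℕ}, cInv a = cInv b → a = b := by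
    intro a b h
    rcases lt_trichotomy a b with hab | hab | hab
    · exact absurd h (ne_of_gt (clt hab))
    · exact hab
    · exact absurd h (ne_of_lt (clt hab))
  have czero : cInv 0 = 1 := by simp [hcInvdef]
  have csucc : ∀ n : ℕ, ((Fintype.card K : ℕ):ℝ) * cInv (n + 1) = cInv n := by
    intro n
    have h2 : ((Fintype.card K : ℕ):ℝ) ≠ 0 := by
      have := hq2R; intro h; rw [h] at this; linarith
    simp only [hcInvdef]
    push_cast
    rw [pow_succ]
    field_simp

  -- basic dimension facts
  have hUlt : ∀ j, finrank K (U j) < k := fun j => by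
    rw [hk]; exact lt_of_le_of_lt (Finset.le_sup (f := fun j => finrank K (U j)) (mem_univ j)) hmax
  have hUle : ∀ j, finrank K (U j) ≤ k - 1 := fun j => by have := hUlt j; omega
  have hVle : ∀ i, finrank K (V i) ≤ k := fun i => hk ▸ Finset.le_sup (f := fun i => finrank K (V i)) (mem_univ i)
  have hk1 : 1 ≤ k := by have := hUlt ⟨0, by omega⟩; omega
  have hkk : k - 1 + 1 = k := by omega
  have hcardp : ∀ p : Submodule K W,
      (Nat.card p : ℝ) = ((Fintype.card K ^ finrank K p : ℕ) : ℝ) := by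
    intro p
    haveI : Finite W := Module.finite_of_finite K
    haveI : Fintype W := Fintype.ofFinite W
    rw [Nat.card_eq_fintype_card]
    norm_cast
    exact card_eq_pow_finrank
  have heq' : ∀ w : W, ∑ i, (if w ∈ V i then cInv (finrank K (V i)) else 0)
      = ∑ j, (if w ∈ U j then cInv (finrank K (U j)) else 0) := by
    intro w
    have h := heq w
    simp only [Set.indicator_apply, Pi.one_apply, SetLike.mem_coe, mul_ite, mul_one,
      mul_zero, hcardp] at h
    convert h using 2 <;> rename_i x <;> congr 1
  -- helpers about the sums
  have tnn : ∀ (T : Fin (Fintype.card K + 1) → Submodule K W) (w : W) j,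
      0 ≤ (if w ∈ T j then cInv (finrank K (T j)) else 0) := by
    intro T w j
    split
    · exact (cpos _).le
    · exact le_rfl
  have tle : ∀ (T : Fin (Fintype.card K + 1) → Submodule K W) (w : W) j, w ∈ T j →
      cInv (finrank K (T j)) ≤ ∑ i, (if w ∈ T i then cInv (finrank K (T i)) else 0) := by
    intro T w j hj
    have h := Finset.single_le_sum (f := fun i => if w ∈ T i then cInv (finrank K (T i)) else 0)
      (fun i _ => tnn T w i) (mem_univ j)
    simpa only [if_pos hj] using h
  have tzero : ∀ (T : Fin (Fintype.card K + 1) → Submodule K W) (w : W), (∀ j, w ∉ T j) →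
      ∑ i, (if w ∈ T i then cInv (finrank K (T i)) else 0) = 0 := by
    intro T w h
    exact Finset.sum_eq_zero fun i _ => if_neg (h i)
  have hexU : ∀ w : W, (∑ j, (if w ∈ U j then cInv (finrank K (U j)) else 0)) ≠ 0 →
      ∃ j, w ∈ U j := by
    intro w h
    by_contra hc
    push_neg at hc
    exact h (tzero U w hc)
  -- the maximal space
  obtain ⟨i₀, -, hi₀⟩ := Finset.exists_mem_eq_sup univ univ_nonempty
    (fun i => finrank K (V i))
  set 𝒱 := V i₀ with h𝒱def
  have hVA : finrank K 𝒱 = k := by rw [hk, hi₀]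
  set A : Finset (Fin (Fintype.card K + 1)) := univ.filter (fun i => V i = 𝒱) with hAdef
  have hi₀A : i₀ ∈ A := mem_filter.mpr ⟨mem_univ _, rfl⟩
  have hAmem : ∀ i ∈ A, V i = 𝒱 := fun i hi => (mem_filter.mp hi).2
  have hA1 : 1 ≤ A.card := card_pos.mpr ⟨i₀, hi₀A⟩
  have hnotleV : ∀ i, i ∉ A → ¬ 𝒱 ≤ V i := by
    intro i hiA hle
    exact hiA (mem_filter.mpr ⟨mem_univ _,
      (Submodule.eq_of_le_of_finrank_le hle (by rw [hVA]; exact hVle i)).symm⟩)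
  have hAq : Fintype.card K ≤ A.card := by
    obtain ⟨w₀, hw₀𝒱, hw₀⟩ := aux_not_covered 𝒱 ((univ \ A).image V)
      (le_trans card_image_le
        (by rw [card_sdiff_of_subset (subset_univ A), card_univ, Fintype.card_fin]; omega))
      (by rintro p hp
          obtain ⟨i, hi, rfl⟩ := mem_image.mp hp
          exact hnotleV i (mem_sdiff.mp hi).2)
    have hw₀V : ∀ i, i ∉ A → w₀ ∉ V i := fun i hi =>
      hw₀ _ (mem_image_of_mem V (mem_sdiff.mpr ⟨mem_univ _, hi⟩))
    have hVsum : ∑ i, (if w₀ ∈ V i then cInv (finrank K (V i)) else 0)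
        = (A.card : ℝ) * cInv k := by
      have hterm : ∀ i, (if w₀ ∈ V i then cInv (finrank K (V i)) else 0)
          = (if i ∈ A then cInv k else 0) := by
        intro i
        by_cases hi : i ∈ A
        · rw [if_pos hi, if_pos (by rw [hAmem i hi]; exact hw₀𝒱), hAmem i hi, hVA]
        · rw [if_neg hi, if_neg (hw₀V i hi)]
      rw [Finset.sum_congr rfl (fun i _ => hterm i), Finset.sum_ite_mem, univ_inter,
        Finset.sum_const, nsmul_eq_mul]
    obtain ⟨j, hj⟩ : ∃ j, w₀ ∈ U j := by
      apply hexU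
      rw [← heq' w₀, hVsum]
      have h1 := cpos k
      have h2 : (0:ℝ) < (A.card : ℝ) := by exact_mod_cast hA1
      positivity
    have hge : cInv (k - 1) ≤ (A.card : ℝ) * cInv k := by
      calc cInv (k - 1) ≤ cInv (finrank K (U j)) := cle (hUle j)
        _ ≤ ∑ i, (if w₀ ∈ U i then cInv (finrank K (U i)) else 0) := tle U w₀ j hj
        _ = (A.card : ℝ) * cInv k := by rw [← heq' w₀, hVsum]
    have hc1 : cInv (k - 1) = ((Fintype.card K : ℕ) : ℝ) * cInv k := by
      rw [← csucc (k - 1), hkk]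
    rw [hc1] at hge
    exact_mod_cast (mul_le_mul_iff_of_pos_right (cpos k)).mp hge
  have hAcard : A.card = Fintype.card K := by
    refine le_antisymm ?_ hAq
    by_contra hgt
    push_neg at hgt
    have hAu : A = univ := by
      apply Finset.eq_univ_of_card
      have h1 := card_le_card (subset_univ A)
      rw [card_univ, Fintype.card_fin] at h1
      rw [Fintype.card_fin]
      omega
    have h0 := heq' 0
    have hL : ∑ i, (if (0:W) ∈ V i then cInv (finrank K (V i)) else 0)
        = ((Fintype.card K + 1 : ℕ) : ℝ) * cInv k := by
      have hterm : ∀ i : Fin (Fintype.card K + 1),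
          (if (0:W) ∈ V i then cInv (finrank K (V i)) else 0) = cInv k := by
        intro i
        rw [if_pos (Submodule.zero_mem _), hAmem i (hAu ▸ mem_univ i), hVA]
      rw [Finset.sum_congr rfl (fun i _ => hterm i), Finset.sum_const, card_univ,
        Fintype.card_fin, nsmul_eq_mul]
    have hR : ((Fintype.card K + 1 : ℕ) : ℝ) * (((Fintype.card K : ℕ) : ℝ) * cInv k)
        ≤ ∑ j, (if (0:W) ∈ U j then cInv (finrank K (U j)) else 0) := by
      have hterm : ∀ j : Fin (Fintype.card K + 1),
          ((Fintype.card K : ℕ) : ℝ) * cInv k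
            ≤ (if (0:W) ∈ U j then cInv (finrank K (U j)) else 0) := by
        intro j
        rw [if_pos (Submodule.zero_mem _)]
        have h1 : ((Fintype.card K : ℕ) : ℝ) * cInv k = cInv (k - 1) := by
          rw [← csucc (k - 1), hkk]
        rw [h1]
        exact cle (hUle j)
      calc ((Fintype.card K + 1 : ℕ) : ℝ) * (((Fintype.card K : ℕ) : ℝ) * cInv k)
          = ∑ _j : Fin (Fintype.card K + 1), ((Fintype.card K : ℕ) : ℝ) * cInv k := by
            rw [Finset.sum_const, card_univ, Fintype.card_fin, nsmul_eq_mul]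
        _ ≤ _ := Finset.sum_le_sum (fun j _ => hterm j)
    rw [← h0, hL] at hR
    have hck := cpos k
    push_cast at hR
    have h3 : (0:ℝ) < ((Fintype.card K : ℕ) : ℝ) + 1 := by linarith
    nlinarith [mul_pos h3 hck, hq2R, hck]
  obtain ⟨t, ht⟩ := card_eq_one.mp (show (univ \ A).card = 1 by
    rw [card_sdiff_of_subset (subset_univ A), card_univ, Fintype.card_fin, hAcard]; omega)
  have htA : t ∉ A := by
    have h1 : t ∈ univ \ A := ht ▸ mem_singleton_self t
    exact (mem_sdiff.mp h1).2
  have hVt' : ∀ i, i ≠ t → V i = 𝒱 := by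
    intro i hi
    by_contra h
    have hiA : i ∉ A := fun hiA => h (hAmem i hiA)
    have h2 : i ∈ univ \ A := mem_sdiff.mpr ⟨mem_univ _, hiA⟩
    rw [ht] at h2
    exact hi (mem_singleton.mp h2)
  set S := V t with hSdef
  set d := finrank K S with hddef
  have hdk : d ≤ k := hVle t
  have hSne : S ≠ 𝒱 := fun h => htA (mem_filter.mpr ⟨mem_univ _, h⟩)
  have heq2 : ∀ w : W, ∑ i, (if w ∈ V i then cInv (finrank K (V i)) else 0)
      = (if w ∈ 𝒱 then ((Fintype.card K : ℕ) : ℝ) * cInv k else 0)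
        + (if w ∈ S then cInv d else 0) := by
    intro w
    rw [← Finset.sum_erase_add univ _ (mem_univ t)]
    congr 1
    · have hterm : ∀ i ∈ univ.erase t,
          (if w ∈ V i then cInv (finrank K (V i)) else 0)
            = (if w ∈ 𝒱 then cInv k else 0) := by
        intro i hi
        rw [hVt' i (ne_of_mem_erase hi), hVA]
      rw [Finset.sum_congr rfl hterm, Finset.sum_const, card_erase_of_mem (mem_univ t),
        card_univ, Fintype.card_fin, Nat.add_sub_cancel]
      simp [nsmul_eq_mul, mul_ite]
  -- unique hyperplane through points of 𝒱 \ S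
  have key1 : ∀ w : W, w ∈ 𝒱 → w ∉ S →
      ∃ j, w ∈ U j ∧ finrank K (U j) = k - 1 ∧ ∀ j', w ∈ U j' → j' = j := by
    intro w hw hws
    have he : ∑ j, (if w ∈ U j then cInv (finrank K (U j)) else 0) = cInv (k - 1) := by
      rw [← heq' w, heq2 w, if_pos hw, if_neg hws, add_zero, ← csucc (k - 1), hkk]
    obtain ⟨j, hj⟩ := hexU w (by rw [he]; exact ne_of_gt (cpos _))
    have huni : ∀ j', w ∈ U j' → j' = j := by
      intro j' hj'
      by_contra hne
      have h2 := Finset.sum_le_sum_of_subset_of_nonneg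
        (subset_univ ({j, j'} : Finset (Fin (Fintype.card K + 1)))) (fun i _ _ => tnn U w i)
      rw [Finset.sum_pair (fun h => hne h.symm)] at h2
      rw [if_pos hj, if_pos hj', he] at h2
      have hc1 : cInv (k - 1) ≤ cInv (finrank K (U j)) := cle (hUle j)
      have hc2 : cInv (k - 1) ≤ cInv (finrank K (U j')) := cle (hUle j')
      linarith [cpos (k - 1)]
    have hdim : finrank K (U j) = k - 1 := by
      have hsingle : ∑ i, (if w ∈ U i then cInv (finrank K (U i)) else 0)
          = cInv (finrank K (U j)) := by
        refine (Finset.sum_eq_single_of_mem j (mem_univ j) ?_).trans (if_pos hj)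
        intro b _ hb
        exact if_neg (fun hmem => hb (huni b hmem))
      exact cinj (hsingle.symm.trans he)
    exact ⟨j, hj, hdim, huni⟩
  -- each U j is inside 𝒱 or inside S
  have hU_sub : ∀ j, U j ≤ 𝒱 ∨ U j ≤ S := by
    intro j
    apply aux_union_two
    intro x hx
    by_contra hc
    push_neg at hc
    have h1 : ∑ i, (if x ∈ V i then cInv (finrank K (V i)) else 0) = 0 := by
      rw [heq2 x, if_neg hc.1, if_neg hc.2, add_zero]
    have h2 := tle U x j hx
    rw [← heq' x, h1] at h2
    exact absurd h2 (not_le.mpr (cpos _))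
  have hS𝒱 : S ≤ 𝒱 := by
    by_contra hns
    have hnotVS : ¬ 𝒱 ≤ S := by
      intro hle
      exact hSne (Submodule.eq_of_le_of_finrank_le hle (by rw [hVA]; exact hdk)).symm
    set B : Finset (Fin (Fintype.card K + 1)) := univ.filter (fun j => U j ≤ 𝒱) with hBdef
    have hBcov : ∀ x : W, x ∈ 𝒱 → x ∉ S → ∃ j ∈ B, x ∈ U j := by
      intro x hx hxs
      obtain ⟨j, hj, -, -⟩ := key1 x hx hxs
      refine ⟨j, ?_, hj⟩
      rcases hU_sub j with h | h
      · exact mem_filter.mpr ⟨mem_univ _, h⟩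
      · exact absurd (h hj) hxs
    have hBq : Fintype.card K ≤ B.card := by
      by_contra hlt
      push_neg at hlt
      obtain ⟨x, hx𝒱, hxall⟩ := aux_not_covered 𝒱 (insert S (B.image U))
        (le_trans (card_insert_le _ _)
          (by have := card_image_le (s := B) (f := U); omega))
        (by rintro p hp
            rcases mem_insert.mp hp with rfl | hp
            · exact hnotVS
            · obtain ⟨j, hj, rfl⟩ := mem_image.mp hp
              intro hle
              have h1 : k ≤ finrank K (U j) := by
                rw [← hVA]; exact Submodule.finrank_mono hle
              exact absurd h1 (not_le.mpr (hUlt j)))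
      have hxS : x ∉ S := hxall S (mem_insert_self _ _)
      obtain ⟨j, hjB, hjx⟩ := hBcov x hx𝒱 hxS
      exact hxall (U j) (mem_insert_of_mem (mem_image_of_mem U hjB)) hjx
    have hBc1 : (univ \ B).card ≤ 1 := by
      have h1 := card_le_card (subset_univ B)
      rw [card_univ, Fintype.card_fin] at h1
      rw [card_sdiff_of_subset (subset_univ B), card_univ, Fintype.card_fin]
      omega
    obtain ⟨j₀, hj₀⟩ := Finset.card_le_one_iff_subset_singleton.mp hBc1
    have hmemB : ∀ j, j ≠ j₀ → U j ≤ 𝒱 := by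
      intro j hne
      by_contra h
      have h1 : j ∈ univ \ B := mem_sdiff.mpr ⟨mem_univ _, fun hj => h (mem_filter.mp hj).2⟩
      exact hne (mem_singleton.mp (hj₀ h1))
    obtain ⟨s₀, hs₀S, hs₀𝒱⟩ := SetLike.not_le_iff_exists.mp hns
    obtain ⟨j₁, hj₁⟩ : ∃ j, s₀ ∈ U j := by
      apply hexU
      rw [← heq' s₀, heq2 s₀, if_neg hs₀𝒱, if_pos hs₀S, zero_add]
      exact ne_of_gt (cpos d)
    have hj₁j₀ : j₁ = j₀ := by
      by_contra hne
      exact hs₀𝒱 (hmemB j₁ hne hj₁)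
    have hj₀x : s₀ ∈ U j₀ := hj₁j₀ ▸ hj₁
    have hUj₀S : U j₀ ≤ S := (hU_sub j₀).resolve_left (fun h => hs₀𝒱 (h hj₀x))
    have hcover : ∀ x ∈ S, x ∈ 𝒱 ∨ x ∈ U j₀ := by
      intro x hx
      by_contra hc
      push_neg at hc
      obtain ⟨j, hj⟩ : ∃ j, x ∈ U j := by
        apply hexU
        rw [← heq' x, heq2 x, if_neg hc.1, if_pos hx, zero_add]
        exact ne_of_gt (cpos d)
      rcases eq_or_ne j j₀ with rfl | hne
      · exact hc.2 hj
      · exact hc.1 (hmemB j hne hj)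
    rcases aux_union_two S 𝒱 (U j₀) hcover with h | h
    · exact hns h
    · have hSU : S = U j₀ := le_antisymm h hUj₀S
      have hcancel : ∀ x : W,
          (if x ∈ 𝒱 then ((Fintype.card K : ℕ) : ℝ) * cInv k else 0)
            = ∑ j ∈ univ.erase j₀, (if x ∈ U j then cInv (finrank K (U j)) else 0) := by
        intro x
        have h1 := (heq2 x).symm.trans (heq' x)
        rw [← Finset.sum_erase_add univ _ (mem_univ j₀)] at h1
        have h2 : (if x ∈ U j₀ then cInv (finrank K (U j₀)) else 0)
            = (if x ∈ S then cInv d else 0) := by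
          rw [hddef, hSU]
        rw [h2] at h1
        exact add_right_cancel h1
      obtain ⟨x, hx, hxall⟩ := aux_not_covered 𝒱 ((univ.erase j₀).image U)
        (le_trans card_image_le
          (by rw [card_erase_of_mem (mem_univ j₀), card_univ, Fintype.card_fin]; omega))
        (by rintro p hp
            obtain ⟨j, hj, rfl⟩ := mem_image.mp hp
            intro hle
            have h1 : k ≤ finrank K (U j) := by
              rw [← hVA]; exact Submodule.finrank_mono hle
            exact absurd h1 (not_le.mpr (hUlt j)))
      have h3 := hcancel x
      rw [if_pos hx,
        Finset.sum_eq_zero (fun j hj => if_neg (hxall _ (mem_image_of_mem U hj)))] at h3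
      have h4 := cpos k
      exact absurd h3 (ne_of_gt (mul_pos (lt_of_lt_of_le zero_lt_two hq2R) h4))
  have hU𝒱 : ∀ j, U j ≤ 𝒱 := fun j => (hU_sub j).elim id (fun h => le_trans h hS𝒱)
  -- evaluation at 0
  have h00 : cInv (k - 1) + cInv d
      = ∑ j, (if (0:W) ∈ U j then cInv (finrank K (U j)) else 0) := by
    have h1 := (heq2 0).symm.trans (heq' 0)
    rw [if_pos (Submodule.zero_mem _), if_pos (Submodule.zero_mem _)] at h1
    rw [← h1, ← csucc (k - 1), hkk]
  have hRge : ((Fintype.card K : ℕ) : ℝ) * cInv (k - 1) ≤ cInv d := by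
    have h1 : ∑ _j : Fin (Fintype.card K + 1), cInv (k - 1)
        ≤ ∑ j, (if (0:W) ∈ U j then cInv (finrank K (U j)) else 0) := by
      apply Finset.sum_le_sum
      intro j _
      rw [if_pos (Submodule.zero_mem _)]
      exact cle (hUle j)
    rw [Finset.sum_const, card_univ, Fintype.card_fin, nsmul_eq_mul, ← h00] at h1
    push_cast at h1 ⊢
    linarith
  have hk2 : 2 ≤ k := by
    by_contra hlt
    push_neg at hlt
    have hk10 : k - 1 = 0 := by omega
    rw [hk10, czero, mul_one] at hRge
    have h1 := cle (Nat.zero_le d)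
    rw [czero] at h1
    linarith
  have hkk2 : k - 2 + 1 = k - 1 := by omega
  have hdk2 : d ≤ k - 2 := by
    have h1 : cInv (k - 2) ≤ cInv d := by
      calc cInv (k - 2) = ((Fintype.card K : ℕ) : ℝ) * cInv (k - 1) := by
            rw [← csucc (k - 2), hkk2]
        _ ≤ cInv d := hRge
    by_contra hgt
    push_neg at hgt
    exact absurd h1 (not_le.mpr (clt hgt))
  -- all U j are hyperplanes
  have hdichot : ∀ j, finrank K (U j) = k - 1 ∨ U j ≤ S := by
    intro j
    by_cases hcase : ∃ x ∈ U j, x ∉ S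
    · obtain ⟨x, hxj, hxS⟩ := hcase
      obtain ⟨j', hj', hdim, huni⟩ := key1 x (hU𝒱 j hxj) hxS
      left
      rw [huni j hxj]
      exact hdim
    · push_neg at hcase
      exact Or.inr hcase
  set D : Finset (Fin (Fintype.card K + 1)) :=
    univ.filter (fun j => ¬ finrank K (U j) = k - 1) with hDdef
  have hDle : ∀ j ∈ D, cInv d ≤ cInv (finrank K (U j)) := by
    intro j hj
    have h1 : U j ≤ S := (hdichot j).resolve_left (mem_filter.mp hj).2
    have h2 : finrank K (U j) ≤ d := by
      rw [hddef]; exact Submodule.finrank_mono h1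
    exact cle h2
  have hDempty : D = ∅ := by
    by_contra hne
    have hr1 : 1 ≤ D.card := card_pos.mpr (Finset.nonempty_iff_ne_empty.mpr hne)
    have hrle : D.card ≤ Fintype.card K + 1 := by
      have h1 := card_le_card (subset_univ D)
      rwa [card_univ, Fintype.card_fin] at h1
    have hsplit : ∑ j, (if (0:W) ∈ U j then cInv (finrank K (U j)) else 0)
        = ∑ j ∈ univ \ D, cInv (finrank K (U j)) + ∑ j ∈ D, cInv (finrank K (U j)) := by
      rw [← Finset.sum_sdiff (subset_univ D)]
      congr 1 <;> exact Finset.sum_congr rfl (fun j _ => if_pos (Submodule.zero_mem _))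
    have h1 : ∑ j ∈ univ \ D, cInv (finrank K (U j))
        = (((univ \ D).card : ℕ) : ℝ) * cInv (k - 1) := by
      rw [Finset.sum_congr rfl (fun j hj => ?_), Finset.sum_const, nsmul_eq_mul]
      have h2 : ¬ ¬ finrank K (U j) = k - 1 :=
        fun h => (mem_sdiff.mp hj).2 (mem_filter.mpr ⟨mem_univ _, h⟩)
      rw [not_not.mp h2]
    have h2 : (D.card : ℝ) * cInv d ≤ ∑ j ∈ D, cInv (finrank K (U j)) := by
      calc (D.card : ℝ) * cInv d = ∑ _j ∈ D, cInv d := by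
            rw [Finset.sum_const, nsmul_eq_mul]
        _ ≤ _ := Finset.sum_le_sum hDle
    have h3 := h00
    rw [hsplit, h1] at h3
    have h5 : (((univ \ D).card : ℕ) : ℝ)
        = ((Fintype.card K : ℕ) : ℝ) + 1 - (D.card : ℝ) := by
      rw [card_sdiff_of_subset (subset_univ D), card_univ, Fintype.card_fin]
      push_cast [Nat.cast_sub hrle]
      ring
    rw [h5] at h3
    have hr1R : (1:ℝ) ≤ (D.card : ℝ) := by exact_mod_cast hr1
    have hck1 := cpos (k - 1)
    exact aux_real (D.card : ℝ) ((Fintype.card K : ℕ) : ℝ) (cInv (k - 1)) (cInv d)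
      (∑ j ∈ D, cInv (finrank K (U j))) h3 h2 hr1R hq2R hck1 hRge
  have hUdim : ∀ j, finrank K (U j) = k - 1 := by
    intro j
    by_contra h
    have h1 : j ∈ D := mem_filter.mpr ⟨mem_univ _, h⟩
    rw [hDempty] at h1
    exact absurd h1 (notMem_empty j)
  have hdval : d = k - 2 := by
    have h1 : ∑ j, (if (0:W) ∈ U j then cInv (finrank K (U j)) else 0)
        = ((Fintype.card K + 1 : ℕ) : ℝ) * cInv (k - 1) := by
      rw [Finset.sum_congr rfl (fun j _ => by rw [if_pos (Submodule.zero_mem _), hUdim j]),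
        Finset.sum_const, card_univ, Fintype.card_fin, nsmul_eq_mul]
    have h2 := h00
    rw [h1] at h2
    have h4 : cInv (k - 2) = ((Fintype.card K : ℕ) : ℝ) * cInv (k - 1) := by
      rw [← csucc (k - 2), hkk2]
    have h3 : cInv d = cInv (k - 2) := by
      push_cast at h2
      linarith
    exact cinj h3
  have hSUall : ∀ j, S ≤ U j := by
    intro j x hx
    have hx𝒱 : x ∈ 𝒱 := hS𝒱 hx
    have h1 := (heq2 x).symm.trans (heq' x)
    rw [if_pos hx𝒱, if_pos hx] at h1
    have h2 : ∑ j', (if x ∈ U j' then cInv (finrank K (U j')) else 0)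
        = ((univ.filter (fun j' => x ∈ U j')).card : ℝ) * cInv (k - 1) := by
      rw [← Finset.sum_filter,
        Finset.sum_congr rfl (fun j' _ => by rw [hUdim j']), Finset.sum_const, nsmul_eq_mul]
    rw [h2] at h1
    have h3 : ((Fintype.card K : ℕ) : ℝ) * cInv k = cInv (k - 1) := by
      rw [← csucc (k - 1), hkk]
    have h4 : cInv d = ((Fintype.card K : ℕ) : ℝ) * cInv (k - 1) := by
      rw [hdval, ← csucc (k - 2), hkk2]
    rw [h3, h4] at h1
    have hc := cpos (k - 1)
    have h6 : (1 + ((Fintype.card K : ℕ) : ℝ)) * cInv (k - 1)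
        = ((univ.filter (fun j' => x ∈ U j')).card : ℝ) * cInv (k - 1) := by
      ring_nf
      ring_nf at h1
      linarith
    have h5 := mul_right_cancel₀ (ne_of_gt hc) h6
    have h7 : (univ.filter (fun j' => x ∈ U j')).card = Fintype.card K + 1 := by
      have h7' : ((univ.filter (fun j' => x ∈ U j')).card : ℝ)
          = ((Fintype.card K : ℕ) : ℝ) + 1 := by linarith [h5]
      exact_mod_cast h7'
    have h8 : univ.filter (fun j' => x ∈ U j') = univ :=
      Finset.eq_univ_of_card _ (by rw [h7, Fintype.card_fin])
    have h9 : j ∈ univ := mem_univ j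
    rw [← h8] at h9
    exact (mem_filter.mp h9).2
  have hUSne : ∀ j, ¬ U j ≤ S := by
    intro j hle
    have h1 : finrank K (U j) ≤ d := by
      rw [hddef]; exact Submodule.finrank_mono hle
    rw [hUdim j] at h1
    omega
  have hUinj : Function.Injective U := by
    intro a b hab
    obtain ⟨x, hxa, hxS⟩ := SetLike.not_le_iff_exists.mp (hUSne a)
    obtain ⟨j, hj, -, huni⟩ := key1 x (hU𝒱 a hxa) hxS
    exact (huni a hxa).trans (huni b (hab ▸ hxa)).symm
  have hrange : ∀ W' : Submodule K W, W' ∈ Set.range U ↔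
      S ≤ W' ∧ W' ≤ 𝒱 ∧ finrank K W' = k - 1 := by
    intro W'
    constructor
    · rintro ⟨j, rfl⟩
      exact ⟨hSUall j, hU𝒱 j, hUdim j⟩
    · rintro ⟨h1, h2, h3⟩
      have hW'S : ¬ W' ≤ S := by
        intro hle
        have h4 : finrank K W' ≤ d := by
          rw [hddef]; exact Submodule.finrank_mono hle
        rw [h3] at h4
        omega
      obtain ⟨x, hxW', hxS⟩ := SetLike.not_le_iff_exists.mp hW'S
      obtain ⟨j, hj, hdim, -⟩ := key1 x (h2 hxW') hxS
      refine ⟨j, ?_⟩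
      have hT1 : S ⊔ Submodule.span K {x} ≤ W' :=
        sup_le h1 ((Submodule.span_singleton_le_iff_mem x W').mpr hxW')
      have hT2 : S ⊔ Submodule.span K {x} ≤ U j :=
        sup_le (hSUall j) ((Submodule.span_singleton_le_iff_mem x (U j)).mpr hj)
      have hTlt : S < S ⊔ Submodule.span K {x} :=
        lt_of_le_of_ne le_sup_left (fun h => hxS ((le_of_eq h.symm)
          (Submodule.mem_sup_right (Submodule.mem_span_singleton_self x))))
      have hTrank : k - 1 ≤ finrank K (S ⊔ Submodule.span K {x} : Submodule K W) := by
        have h4 := Submodule.finrank_lt_finrank_of_lt hTlt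
        rw [← hddef] at h4
        omega
      have e1 : S ⊔ Submodule.span K {x} = U j :=
        Submodule.eq_of_le_of_finrank_le hT2 (by rw [hdim]; exact hTrank)
      have e2 : S ⊔ Submodule.span K {x} = W' :=
        Submodule.eq_of_le_of_finrank_le hT1 (by rw [h3]; exact hTrank)
      rw [← e1, e2]
  refine ⟨𝒱, S, hS𝒱, hVA, by rw [← hddef]; exact hdval, ?_, hUinj, hrange⟩
  refine ⟨Equiv.swap (Fin.last (Fintype.card K)) t, ?_⟩
  intro i
  rcases eq_or_ne i (Fin.last (Fintype.card K)) with rfl | hi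
  · rw [if_pos rfl, Equiv.swap_apply_left]
  · rw [if_neg hi]
    rcases eq_or_ne i t with rfl | hit
    · rw [Equiv.swap_apply_right]
      exact hVt' _ (Ne.symm hi)
    · rw [Equiv.swap_apply_of_ne_of_ne hi hit]
      exact hVt' i hit
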